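/- Every infinite cyclic subgroup of G = ℤ/pℤ ⊕ ℤ is contained in a maximal infinite cyclic subgroup, and the maximal infinite cyclic subgroups are exactly C(0,1) together with the C(i,p^r) for i ≠ 0 in ℤ/pℤ and r ≥ 0. -/

import Mathlib

open AddSubgroup

lemma inf_iff {p : ℕ} (hp : p.Prime) (a : ZMod p × ℤ) :
    ((zmultiples a : AddSubgroup (ZMod p × ℤ)) : Set (ZMod p × ℤ)).Infinite ↔ a.2 ≠ 0 := by
  haveI : Fact p.Prime := ⟨hp⟩
  constructor
  · intro h h0
    apply h
    have hsub : ((zmultiples a : AddSubgroup (ZMod p × ℤ)) : Set (ZMod p × ℤ)) ⊆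
        Set.univ ×ˢ {0} := by
      rintro x hx
      obtain ⟨k, rfl⟩ := mem_zmultiples_iff.mp hx
      refine ⟨trivial, ?_⟩
      have : (k • a).2 = k • a.2 := rfl
      simp [this, h0]
    exact (Set.finite_univ.prod (Set.finite_singleton 0)).subset hsub
  · intro h
    apply Set.infinite_of_injective_forall_mem (f := fun k : ℤ => k • a)
    · intro k l hkl
      have h2 : k * a.2 = l * a.2 := congrArg Prod.snd hkl
      exact mul_right_cancel₀ h h2
    · intro k
      exact mem_zmultiples_iff.mpr ⟨k, rfl⟩

/-- A maximal infinite cyclic subgroup of an additive group. -/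
def IsMaxInfCyclic {G : Type*} [AddGroup G] (C : AddSubgroup G) : Prop :=
  (∃ g, C = AddSubgroup.zmultiples g) ∧ (C : Set G).Infinite ∧
    ∀ D : AddSubgroup G, (∃ g, D = AddSubgroup.zmultiples g) →
      (D : Set G).Infinite → C ≤ D → C = D

lemma max_of {p : ℕ} (hp : p.Prime) (a : ZMod p × ℤ) (ha2 : a.2 ≠ 0)
    (hcrit : ∀ (k : ℤ) (b : ZMod p × ℤ), k • b = a → k = 1 ∨ k = -1) :
    IsMaxInfCyclic (zmultiples a) := by
  refine ⟨⟨a, rfl⟩, (inf_iff hp a).mpr ha2, ?_⟩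
  rintro D ⟨b, rfl⟩ hDinf hle
  obtain ⟨k, hk⟩ := mem_zmultiples_iff.mp (hle (mem_zmultiples a))
  refine le_antisymm hle (zmultiples_le.mpr ?_)
  rcases hcrit k b hk with h1 | h1
  · subst h1; rw [one_smul] at hk; rw [hk]; exact mem_zmultiples a
  · subst h1
    refine mem_zmultiples_iff.mpr ⟨-1, ?_⟩
    rw [← hk]; simp

lemma crit01 {p : ℕ} (k : ℤ) (b : ZMod p × ℤ)
    (hk : k • b = ((0 : ZMod p), (1 : ℤ))) : k = 1 ∨ k = -1 := by
  have h2 : k * b.2 = 1 := congrArg Prod.snd hk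
  exact Int.isUnit_iff.mp (IsUnit.of_mul_eq_one _ h2)

lemma critpr {p : ℕ} (hp : p.Prime) (i : ZMod p) (hi : i ≠ 0) (r : ℕ) (k : ℤ) (b : ZMod p × ℤ)
    (hk : k • b = ((i : ZMod p), ((p : ℤ) ^ r))) : k = 1 ∨ k = -1 := by
  haveI : Fact p.Prime := ⟨hp⟩
  have h2 : k * b.2 = (p : ℤ) ^ r := congrArg Prod.snd hk
  have h1 : (k : ZMod p) * b.1 = i := by
    have : k • b.1 = i := congrArg Prod.fst hk
    rwa [zsmul_eq_mul] at this
  have hknz : (k : ZMod p) ≠ 0 := by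
    intro h0
    exact hi (by rw [← h1, h0, zero_mul])
  have hpk : ¬ (p : ℤ) ∣ k := fun hd => hknz ((ZMod.intCast_zmod_eq_zero_iff_dvd k p).mpr hd)
  have hdvd : k ∣ (p : ℤ) ^ r := ⟨b.2, h2.symm⟩
  have hdvdn : k.natAbs ∣ p ^ r := by
    have := Int.natAbs_dvd_natAbs.mpr hdvd
    rwa [Int.natAbs_pow, Int.natAbs_natCast] at this
  have hcop : Nat.Coprime k.natAbs p := by
    rw [Nat.coprime_comm]
    refine (Nat.Prime.coprime_iff_not_dvd hp).mpr ?_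
    intro hd
    exact hpk (Int.natCast_dvd.mpr hd)
  have h1' : k.natAbs = 1 := (hcop.pow_right r).eq_one_of_dvd hdvdn
  rcases Int.natAbs_eq k with h | h <;> rw [h1'] at h
  · exact Or.inl h
  · exact Or.inr h

lemma contain {p : ℕ} (hp : p.Prime) (a : ZMod p × ℤ) (ha : a.2 ≠ 0) :
    (∃ k : ℤ, k • ((0 : ZMod p), (1 : ℤ)) = a) ∨
      ∃ i : ZMod p, i ≠ 0 ∧ ∃ r : ℕ, ∃ k : ℤ, k • ((i : ZMod p), ((p : ℤ) ^ r)) = a := by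
  haveI : Fact p.Prime := ⟨hp⟩
  by_cases h1 : a.1 = 0
  · left
    exact ⟨a.2, Prod.ext (by simp [h1]) (by simp)⟩
  · right
    set n : ℕ := a.2.natAbs with hn
    have hn0 : n ≠ 0 := Int.natAbs_ne_zero.mpr ha
    set r : ℕ := n.factorization p with hr
    have hprd : (p : ℤ) ^ r ∣ a.2 := by
      have : (p : ℤ) ^ r ∣ (n : ℤ) := by
        exact_mod_cast Int.natCast_dvd_natCast.mpr (Nat.ordProj_dvd n p)
      rcases Int.natAbs_eq a.2 with h | h <;> rw [h]
      · exact this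
      · exact dvd_neg.mpr this
    set m : ℤ := a.2 / (p : ℤ) ^ r with hm
    have hmm : m * (p : ℤ) ^ r = a.2 := Int.ediv_mul_cancel hprd
    have hpm : ¬ (p : ℤ) ∣ m := by
      intro ⟨t, ht⟩
      have : (p : ℤ) ^ (r + 1) ∣ a.2 := ⟨t, by rw [← hmm, ht]; ring⟩
      have h2 : (p : ℤ) ^ (r + 1) ∣ (n : ℤ) := (Int.dvd_natAbs).mpr this
      have h3 : p ^ (r + 1) ∣ n := by exact_mod_cast h2
      exact Nat.pow_succ_factorization_not_dvd hn0 hp h3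
    have hmz : (m : ZMod p) ≠ 0 := fun h0 =>
      hpm ((ZMod.intCast_zmod_eq_zero_iff_dvd m p).mp h0)
    refine ⟨(m : ZMod p)⁻¹ * a.1, ?_, r, m, ?_⟩
    · exact mul_ne_zero (inv_ne_zero hmz) h1
    · refine Prod.ext ?_ ?_
      · show m • ((m : ZMod p)⁻¹ * a.1) = a.1
        rw [zsmul_eq_mul, ← mul_assoc, mul_inv_cancel₀ hmz, one_mul]
      · exact hmm

/-- every infinite cyclic subgroup of `ℤ/pℤ × ℤ` is contained in
a maximal infinite cyclic subgroup, and the maximal infinite cyclic subgroups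
are exactly `C(0,1)` together with the `C(i, p^r)` for `i ≠ 0`, `r ≥ 0`. -/
theorem stmt3 (p : ℕ) (hp : p.Prime) :
    (∀ C : AddSubgroup (ZMod p × ℤ), (∃ g, C = AddSubgroup.zmultiples g) →
      (C : Set (ZMod p × ℤ)).Infinite → ∃ D, IsMaxInfCyclic D ∧ C ≤ D) ∧
    (∀ S : AddSubgroup (ZMod p × ℤ), IsMaxInfCyclic S ↔
      S = AddSubgroup.zmultiples ((0, 1) : ZMod p × ℤ) ∨
      ∃ i : ZMod p, i ≠ 0 ∧ ∃ r : ℕ,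
        S = AddSubgroup.zmultiples ((i, (p : ℤ) ^ r) : ZMod p × ℤ)) := by
  haveI : Fact p.Prime := ⟨hp⟩
  have hppos : (p : ℤ) ≠ 0 := by exact_mod_cast hp.ne_zero
  have hM1 : IsMaxInfCyclic (zmultiples ((0 : ZMod p), (1 : ℤ))) :=
    max_of hp _ one_ne_zero (fun k b hk => crit01 k b hk)
  have hM2 : ∀ i : ZMod p, i ≠ 0 → ∀ r : ℕ,
      IsMaxInfCyclic (zmultiples ((i, (p : ℤ) ^ r) : ZMod p × ℤ)) :=
    fun i hi r => max_of hp _ (pow_ne_zero r hppos) (fun k b hk => critpr hp i hi r k b hk)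
  have key : ∀ a : ZMod p × ℤ, a.2 ≠ 0 → ∃ D, IsMaxInfCyclic D ∧ zmultiples a ≤ D ∧
      (D = zmultiples ((0, 1) : ZMod p × ℤ) ∨
        ∃ i : ZMod p, i ≠ 0 ∧ ∃ r : ℕ, D = zmultiples ((i, (p : ℤ) ^ r) : ZMod p × ℤ)) := by
    intro a ha
    rcases contain hp a ha with ⟨k, hk⟩ | ⟨i, hi, r, k, hk⟩
    · exact ⟨_, hM1, zmultiples_le.mpr (mem_zmultiples_iff.mpr ⟨k, hk⟩), Or.inl rfl⟩
    · exact ⟨_, hM2 i hi r, zmultiples_le.mpr (mem_zmultiples_iff.mpr ⟨k, hk⟩),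
        Or.inr ⟨i, hi, r, rfl⟩⟩
  constructor
  · rintro C ⟨g, rfl⟩ hinf
    have hg := (inf_iff hp g).mp hinf
    obtain ⟨D, hD, hle, _⟩ := key g hg
    exact ⟨D, hD, hle⟩
  · intro S
    constructor
    · rintro ⟨⟨g, rfl⟩, hinf, hmax⟩
      have hg := (inf_iff hp g).mp hinf
      obtain ⟨D, hD, hle, hform⟩ := key g hg
      have hSD : zmultiples g = D := hmax D hD.1 hD.2.1 hle
      rw [hSD]; exact hform
    · rintro (rfl | ⟨i, hi, r, rfl⟩)
      · exact hM1
      · exact hM2 i hi r
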